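/- In the Temperley-Lieb algebra TL_n(d), every reduced word in the generators E_1,...,E_{n-1} contains at most one occurrence of E_{n-1}. Equivalently: any word in the E_i containing two occurrences of E_{n-1} is equal in TL_n(d) to a scalar multiple of a word containing strictly fewer occurrences of E_{n-1}. -/

import Mathlib

set_option linter.unusedSectionVars false

lemma TL_split_first (a : ℕ) : ∀ l : List ℕ, 1 ≤ l.count a →
    ∃ s t, l = s ++ a :: t ∧ s.count a = 0 := by
  intro l
  induction l with
  | nil => simp
  | cons b t ih =>
    intro hl
    by_cases hba : b = a
    · exact ⟨[], t, by rw [hba]; rfl, by simp⟩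
    · have h1 : 1 ≤ t.count a := by
        rwa [List.count_cons_of_ne hba] at hl
      obtain ⟨s, t', h2, h3⟩ := ih h1
      exact ⟨b :: s, t', by rw [h2]; rfl, by
        rw [List.count_cons_of_ne hba]; exact h3⟩

section TL

variable {R : Type*} [Ring R] [Algebra ℂ R] (n : ℕ) (d : ℂ) (E : ℕ → R)

variable (hcomm : ∀ i j, 1 ≤ i → i ≤ n - 1 → 1 ≤ j → j ≤ n - 1 →
      (i + 2 ≤ j ∨ j + 2 ≤ i) → E i * E j = E j * E i)
variable (hEiE' : ∀ i, 1 ≤ i → i + 1 ≤ n - 1 → E (i + 1) * E i * E (i + 1) = E (i + 1))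
variable (hsq : ∀ i, 1 ≤ i → i ≤ n - 1 → E i * E i = d • E i)

include hcomm in
lemma TLcomm (k : ℕ) (hk1 : 1 ≤ k) (hk2 : k ≤ n - 1) :
    ∀ u : List ℕ, (∀ a ∈ u, 1 ≤ a ∧ a + 2 ≤ k) →
    E k * (u.map E).prod = (u.map E).prod * E k := by
  intro u
  induction u with
  | nil => simp
  | cons a t ih =>
    intro hu
    have ha := hu a (by simp)
    have ht := fun b hb => hu b (List.mem_cons_of_mem _ hb)
    simp only [List.map_cons, List.prod_cons]
    rw [← mul_assoc, hcomm k a hk1 hk2 ha.1 (by omega) (Or.inr ha.2),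
      mul_assoc, ih ht, mul_assoc]

/-- Reduction statement at level `k`. -/
def TLP (k : ℕ) : Prop :=
  ∀ w : List ℕ, (∀ a ∈ w, 1 ≤ a ∧ a ≤ k) → 2 ≤ w.count k →
    ∃ (c : ℂ) (w' : List ℕ), (∀ a ∈ w', 1 ≤ a ∧ a ≤ k) ∧
      w'.count k < w.count k ∧ (w.map E).prod = c • (w'.map E).prod

include hcomm hEiE' hsq in
/-- Key squeeze lemma: `E m * Y * E m` reduces when `Y` uses letters `< m`. -/
lemma TLsqueeze (m : ℕ) (hm1 : 1 ≤ m) (hm2 : m ≤ n - 1)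
    (IHP : TLP E (m - 1)) :
    ∀ N (y : List ℕ), y.count (m - 1) ≤ N → (∀ a ∈ y, 1 ≤ a ∧ a ≤ m - 1) →
    ∃ (c : ℂ) (y' : List ℕ), (∀ a ∈ y', 1 ≤ a ∧ a ≤ m) ∧ y'.count m ≤ 1 ∧
      E m * (y.map E).prod * E m = c • (y'.map E).prod := by
  intro N
  induction N with
  | zero =>
    -- count (m-1) y = 0 case
    intro y hN hy
    have hy2 : ∀ a ∈ y, 1 ≤ a ∧ a + 2 ≤ m := by
      intro a ha
      have h1 := hy a ha
      have h2 : a ≠ m - 1 := by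
        intro h; subst h
        have := List.count_pos_iff.mpr ha
        omega
      exact ⟨h1.1, by omega⟩
    have hc := TLcomm n E hcomm m hm1 hm2 y hy2
    refine ⟨d, y ++ [m], ?_, ?_, ?_⟩
    · intro a ha
      rcases List.mem_append.mp ha with h | h
      · have h1 := hy a h; exact ⟨h1.1, by omega⟩
      · simp at h; omega
    · have : y.count m = 0 := by
        rw [List.count_eq_zero]
        intro hmem
        have := hy m hmem
        omega
      simp [List.count_append, this]
    · rw [hc, mul_assoc, hsq m hm1 hm2, mul_smul_comm]
      simp [List.prod_append]
  | succ N ih =>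
    intro y hN hy
    by_cases hbig : 2 ≤ y.count (m - 1)
    · obtain ⟨c1, y1, hy1, hlt, heq⟩ := IHP y hy hbig
      obtain ⟨c, y', h1, h2, h3⟩ := ih y1 (by omega) hy1
      refine ⟨c1 * c, y', h1, h2, ?_⟩
      rw [heq, mul_smul_comm, smul_mul_assoc, h3, smul_smul]
    · by_cases hone : y.count (m - 1) = 1
      · -- exactly one occurrence of m - 1
        obtain ⟨u, v, huv, hu0⟩ := TL_split_first (m - 1) y (by omega)
        have hm1' : 1 ≤ m - 1 := by
          have := hy (m - 1) (by rw [huv]; simp)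
          exact this.1
        have hv0 : v.count (m - 1) = 0 := by
          rw [huv] at hone; simp [List.count_append, hu0] at hone
          omega
        have hlt2 : ∀ (l : List ℕ), l.count (m-1) = 0 → (∀ a ∈ l, 1 ≤ a ∧ a ≤ m - 1) →
            ∀ a ∈ l, 1 ≤ a ∧ a + 2 ≤ m := by
          intro l h0 hl a ha
          have h1 := hl a ha
          have h2 : a ≠ m - 1 := by
            intro h; subst h
            have := List.count_pos_iff.mpr ha
            omega
          exact ⟨h1.1, by omega⟩
        have hyu : ∀ a ∈ u, 1 ≤ a ∧ a ≤ m - 1 := fun a ha => hy a (by rw [huv]; simp [ha])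
        have hyv : ∀ a ∈ v, 1 ≤ a ∧ a ≤ m - 1 := fun a ha => hy a (by rw [huv]; simp [ha])
        have hU := TLcomm n E hcomm m hm1 hm2 u (hlt2 u hu0 hyu)
        have hV := TLcomm n E hcomm m hm1 hm2 v (hlt2 v hv0 hyv)
        have hrel : E m * E (m - 1) * E m = E m := by
          have := hEiE' (m - 1) hm1' (by omega)
          rwa [Nat.sub_add_cancel hm1] at this
        refine ⟨1, u ++ v ++ [m], ?_, ?_, ?_⟩
        · intro a ha
          rcases List.mem_append.mp ha with h | h
          · rcases List.mem_append.mp h with h' | h'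
            · have h1 := hyu a h'; exact ⟨h1.1, by omega⟩
            · have h1 := hyv a h'; exact ⟨h1.1, by omega⟩
          · simp at h; omega
        · have hum : u.count m = 0 := by
            rw [List.count_eq_zero]; intro hmem; have := hyu m hmem; omega
          have hvm : v.count m = 0 := by
            rw [List.count_eq_zero]; intro hmem; have := hyv m hmem; omega
          simp [List.count_append, hum, hvm]
        · rw [huv]
          set U := (u.map E).prod
          set V := (v.map E).prod
          have lhs : (((u ++ (m-1) :: v)).map E).prod = U * (E (m-1) * V) := by
            simp [U, V, List.prod_append]
          rw [lhs]
          have : E m * (U * (E (m-1) * V)) * E m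
              = U * (E m * E (m-1) * E m) * V := by
            simp only [mul_assoc]
            rw [← mul_assoc (E m) U, hU]
            simp only [mul_assoc]
            rw [← hV]
          rw [this, hrel, mul_assoc, hV, one_smul]
          simp [U, V, List.prod_append, mul_assoc]
      · exact ih y (by omega) hy

include hcomm hEiE' hsq in
lemma TLmain : ∀ k, k ≤ n - 1 → TLP E k := by
  intro k
  induction k with
  | zero =>
    intro _ w hw hc
    exfalso
    have : (0:ℕ) ∈ w := List.count_pos_iff.mp (by omega)
    have := hw 0 this
    omega
  | succ k ih =>
    intro hk w hw hc
    have hc1 : 1 ≤ w.count (k+1) := le_trans one_le_two hc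
    obtain ⟨x, rest, hx1, hx0⟩ := TL_split_first (k+1) w hc1
    have hrest : 1 ≤ rest.count (k+1) := by
      rw [hx1] at hc; simp [List.count_append, hx0] at hc
      exact List.count_pos_iff.mpr hc
    obtain ⟨y, z, hy1, hy0⟩ := TL_split_first (k+1) rest hrest
    have hwy : ∀ a ∈ y, 1 ≤ a ∧ a ≤ k := by
      intro a ha
      have h1 := hw a (by rw [hx1, hy1]; simp [ha])
      have h2 : a ≠ k + 1 := by
        intro h; subst h
        have := List.count_pos_iff.mpr ha
        omega
      exact ⟨h1.1, by omega⟩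
    have hIHP : TLP E ((k+1) - 1) := by
      simpa using ih (by omega)
    obtain ⟨c, y', hy'1, hy'2, hy'3⟩ :=
      TLsqueeze n d E hcomm hEiE' hsq (k+1) (by omega) hk hIHP (y.count ((k+1)-1)) y
        le_rfl (by simpa using hwy)
    refine ⟨c, x ++ y' ++ z, ?_, ?_, ?_⟩
    · intro a ha
      rcases List.mem_append.mp ha with h | h
      · rcases List.mem_append.mp h with h' | h'
        · exact hw a (by rw [hx1]; simp [h'])
        · exact hy'1 a h'
      · exact hw a (by rw [hx1, hy1]; simp [h])
    · rw [hx1, hy1]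
      simp [List.count_append, hx0, hy0]
      omega
    · rw [hx1, hy1]
      simp only [List.map_append, List.prod_append, List.map_cons, List.prod_cons]
      have key : E (k+1) * ((y.map E).prod * (E (k+1) * (z.map E).prod))
          = (E (k+1) * (y.map E).prod * E (k+1)) * (z.map E).prod := by
        rw [mul_assoc, mul_assoc]
      rw [key, hy'3, smul_mul_assoc, mul_smul_comm]
      simp [List.prod_append, mul_assoc]

end TL

/-- In the Temperley-Lieb algebra `TL_n(d)` (formalized via its
generators and relations), any word in the generators `E_1,...,E_{n-1}` containing at
least two occurrences of `E_{n-1}` is equal to a scalar multiple of a word containing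
strictly fewer occurrences of `E_{n-1}` (hence every reduced word contains at most one
occurrence of `E_{n-1}`). -/
theorem word_reduces_second_top_generator
    {R : Type*} [Ring R] [Algebra ℂ R] (n : ℕ) (d : ℂ)
    (E : ℕ → R)
    (hcomm : ∀ i j, 1 ≤ i → i ≤ n - 1 → 1 ≤ j → j ≤ n - 1 →
      (i + 2 ≤ j ∨ j + 2 ≤ i) → E i * E j = E j * E i)
    (hEiE : ∀ i, 1 ≤ i → i + 1 ≤ n - 1 → E i * E (i + 1) * E i = E i)
    (hEiE' : ∀ i, 1 ≤ i → i + 1 ≤ n - 1 → E (i + 1) * E i * E (i + 1) = E (i + 1))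
    (hsq : ∀ i, 1 ≤ i → i ≤ n - 1 → E i * E i = d • E i)
    (w : List ℕ) (hw : ∀ a ∈ w, 1 ≤ a ∧ a ≤ n - 1)
    (hcount : 2 ≤ w.count (n - 1)) :
    ∃ (c : ℂ) (w' : List ℕ), (∀ a ∈ w', 1 ≤ a ∧ a ≤ n - 1) ∧
      w'.count (n - 1) < w.count (n - 1) ∧
      (w.map E).prod = c • (w'.map E).prod := by
  exact TLmain n d E hcomm hEiE' hsq (n - 1) le_rfl w hw hcount
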